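/- For the smallest eigenvalue δ̃_N^{(1)} of the normal matrix C̃_N(x,k) under condition C_d, the sharper bound δ̃_N^{(1)}(x,k) ≤ (Mσ_k)²(N+1)/(‖L(x,k)‖₂² + 1) holds. -/

import Mathlib

open Matrix

/-- The operator norm on real matrices induced by the Euclidean (ℓ²) norm. -/
noncomputable def opNorm {n : Type*} [Fintype n] [DecidableEq n]
    (P : Matrix n n ℝ) : ℝ :=
  ‖(Matrix.toEuclideanCLM (𝕜 := ℝ) P : EuclideanSpace ℝ n →L[ℝ] EuclideanSpace ℝ n)‖

/-- The Euclidean norm of a vector. -/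
noncomputable def vnorm {n : Type*} [Fintype n] (v : n → ℝ) : ℝ :=
  Real.sqrt (∑ i, v i ^ 2)

/-- The Jacobian cocycle `F_k^n(y)` of `f = f_k` at the point `y`: the product of the
one-step Jacobians `F = F_k` along the orbit of `y`, latest on the left. -/
def jacCoc {d : ℕ} (F : (Fin d → ℝ) → Matrix (Fin d) (Fin d) ℝ)
    (f : (Fin d → ℝ) → (Fin d → ℝ)) (y : Fin d → ℝ) : ℕ → Matrix (Fin d) (Fin d) ℝ
  | 0 => 1
  | (n + 1) => F (f^[n] y) * jacCoc F f y n

/-- The derivative `∂f_k^n/∂k(x)` defined by the recursion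
`∂f_k^{n+1}/∂k(x) = F_k(f_k^n(x)) ∂f_k^n/∂k(x) + ∂f_k/∂k(f_k^n(x))`. -/
def parDer {d : ℕ} (F : (Fin d → ℝ) → Matrix (Fin d) (Fin d) ℝ)
    (f : (Fin d → ℝ) → (Fin d → ℝ)) (w : (Fin d → ℝ) → (Fin d → ℝ))
    (x : Fin d → ℝ) : ℕ → Fin d → ℝ
  | 0 => 0
  | (n + 1) => (F (f^[n] x)).mulVec (parDer F f w x n) + w (f^[n] x)

/-- The augmented `d × (d+1)` Jacobian `F̃_k^n(x) = [F_k^n(x) | ∂f_k^n/∂k(x)]`. -/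
def augment {d : ℕ} (F : Matrix (Fin d) (Fin d) ℝ) (w : Fin d → ℝ) :
    Matrix (Fin d) (Fin d ⊕ Unit) ℝ :=
  Matrix.of fun i j => Sum.elim (fun j' => F i j') (fun _ => w i) j

/-- The normal matrix `C̃_N(x,k) = ∑_{n=0}^N F̃_k^n(x)ᵀ F̃_k^n(x)`. -/
noncomputable def normalMatrix {d : ℕ} (F : (Fin d → ℝ) → Matrix (Fin d) (Fin d) ℝ)
    (f : (Fin d → ℝ) → (Fin d → ℝ)) (w : (Fin d → ℝ) → (Fin d → ℝ))
    (x : Fin d → ℝ) (N : ℕ) : Matrix (Fin d ⊕ Unit) (Fin d ⊕ Unit) ℝ :=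
  ∑ n ∈ Finset.range (N + 1),
    (augment (jacCoc F f x n) (parDer F f w x n))ᵀ * augment (jacCoc F f x n) (parDer F f w x n)



lemma vnorm_eq {n : Type*} [Fintype n] (v : n → ℝ) :
    vnorm v = ‖(WithLp.equiv 2 (n → ℝ)).symm v‖ := by
  rw [vnorm, EuclideanSpace.norm_eq]
  congr 1
  refine Finset.sum_congr rfl fun i _ => ?_
  rw [WithLp.equiv_symm_apply, WithLp.ofLp_toLp, Real.norm_eq_abs, sq_abs]

lemma vnorm_sq {n : Type*} [Fintype n] (v : n → ℝ) : vnorm v ^ 2 = ∑ i, v i ^ 2 :=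
  Real.sq_sqrt (Finset.sum_nonneg fun i _ => sq_nonneg _)

lemma vnorm_mulVec_le {n : Type*} [Fintype n] [DecidableEq n] (P : Matrix n n ℝ) (v : n → ℝ) :
    vnorm (P.mulVec v) ≤ opNorm P * vnorm v := by
  rw [vnorm_eq, vnorm_eq]
  have h := (Matrix.toEuclideanCLM (𝕜 := ℝ) P).le_opNorm ((WithLp.equiv 2 (n → ℝ)).symm v)
  exact h

lemma jacCoc_add {d : ℕ} (F : (Fin d → ℝ) → Matrix (Fin d) (Fin d) ℝ)
    (f : (Fin d → ℝ) → (Fin d → ℝ)) (y : Fin d → ℝ) (n m : ℕ) :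
    jacCoc F f y (n + m) = jacCoc F f (f^[n] y) m * jacCoc F f y n := by
  induction m with
  | zero => simp [jacCoc]
  | succ m ih =>
    show jacCoc F f y ((n + m) + 1) = _
    rw [jacCoc, ih, jacCoc, ← Function.iterate_add_apply, Nat.add_comm m n, mul_assoc]

variable {d : ℕ} {F : (Fin d → ℝ) → Matrix (Fin d) (Fin d) ℝ}
  {f : (Fin d → ℝ) → (Fin d → ℝ)} {w : (Fin d → ℝ) → (Fin d → ℝ)} {x : Fin d → ℝ}

lemma isUnit_shift (hx : ∀ n, IsUnit (jacCoc F f x n)) (n m : ℕ) :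
    IsUnit (jacCoc F f (f^[n] x) m) := by
  have h := hx (n + m)
  rw [jacCoc_add, Matrix.isUnit_iff_isUnit_det, Matrix.det_mul] at h
  rw [Matrix.isUnit_iff_isUnit_det]
  exact isUnit_of_mul_isUnit_left h

lemma jacCoc_mul_inv (hx : ∀ n, IsUnit (jacCoc F f x n)) (n j : ℕ) :
    jacCoc F f x n * (jacCoc F f x (n + j + 1))⁻¹ = (jacCoc F f (f^[n] x) (j + 1))⁻¹ := by
  have h : jacCoc F f x (n + j + 1) = jacCoc F f (f^[n] x) (j + 1) * jacCoc F f x n := by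
    rw [← jacCoc_add]; ring_nf
  rw [h, Matrix.mul_inv_rev, ← mul_assoc,
    Matrix.mul_nonsing_inv _ ((Matrix.isUnit_iff_isUnit_det _).mp (hx n)), one_mul]

lemma parDer_eq (hx : ∀ n, IsUnit (jacCoc F f x n)) (n : ℕ) :
    parDer F f w x n = (jacCoc F f x n).mulVec
      (∑ i ∈ Finset.range n, ((jacCoc F f x (i + 1))⁻¹).mulVec (w (f^[i] x))) := by
  induction n with
  | zero => simp [parDer, jacCoc]
  | succ n ih =>
    rw [parDer, ih, Finset.sum_range_succ, Matrix.mulVec_add, Matrix.mulVec_mulVec]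
    rw [show F (f^[n] x) * jacCoc F f x n = jacCoc F f x (n+1) from rfl]
    congr 1
    rw [Matrix.mulVec_mulVec,
      Matrix.mul_nonsing_inv _ ((Matrix.isUnit_iff_isUnit_det _).mp (hx (n+1))),
      Matrix.one_mulVec]

variable {M σ : ℝ}

lemma tail_est (hM0 : 0 ≤ M) (hM : ∀ y, vnorm (w y) ≤ M)
    (hσy : ∀ m : ℕ, ∑ i ∈ Finset.range m, opNorm ((jacCoc F f x (i + 1))⁻¹) ≤ σ) :
    Summable (fun i : ℕ =>
      (WithLp.equiv 2 (Fin d → ℝ)).symm (((jacCoc F f x (i + 1))⁻¹).mulVec (w (f^[i] x)))) ∧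
    ‖∑' i : ℕ,
      (WithLp.equiv 2 (Fin d → ℝ)).symm (((jacCoc F f x (i + 1))⁻¹).mulVec (w (f^[i] x)))‖
        ≤ M * σ := by
  set g := fun i : ℕ =>
    (WithLp.equiv 2 (Fin d → ℝ)).symm (((jacCoc F f x (i + 1))⁻¹).mulVec (w (f^[i] x))) with hg
  set b := fun i : ℕ => opNorm ((jacCoc F f x (i + 1))⁻¹) * M with hbdef
  have hble : ∀ i, ‖g i‖ ≤ b i := by
    intro i
    rw [hg, ← vnorm_eq]
    exact le_trans (vnorm_mulVec_le _ _)
      (mul_le_mul_of_nonneg_left (hM _) (norm_nonneg _))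
  have hbsum : ∀ m : ℕ, ∑ i ∈ Finset.range m, b i ≤ σ * M := by
    intro m
    rw [hbdef, ← Finset.sum_mul]
    exact mul_le_mul_of_nonneg_right (hσy m) hM0
  have hb : Summable b :=
    summable_of_sum_range_le (fun i => mul_nonneg (norm_nonneg _) hM0) hbsum
  have hgs : Summable g := Summable.of_norm_bounded hb hble
  refine ⟨hgs, ?_⟩
  have h1 : Summable fun i => ‖g i‖ := hb.of_nonneg_of_le (fun _ => norm_nonneg _) hble
  calc ‖∑' i, g i‖ ≤ ∑' i, ‖g i‖ := norm_tsum_le_tsum_norm h1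
    _ ≤ ∑' i, b i := Summable.tsum_le_tsum hble h1 hb
    _ ≤ σ * M := Summable.tsum_le_of_sum_range_le hb hbsum
    _ = M * σ := mul_comm _ _

lemma key_estimate (hM0 : 0 ≤ M) (hM : ∀ y, vnorm (w y) ≤ M)
    (hσ : ∀ y : Fin d → ℝ, (∀ n, IsUnit (jacCoc F f y n)) →
      ∀ m : ℕ, ∑ i ∈ Finset.range m, opNorm ((jacCoc F f y (i + 1))⁻¹) ≤ σ)
    (hx : ∀ n, IsUnit (jacCoc F f x n)) (L : Fin d → ℝ)
    (hL : L = ∑' i : ℕ, ((jacCoc F f x (i + 1))⁻¹).mulVec (w (f^[i] x))) (n : ℕ) :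
    vnorm ((jacCoc F f x n).mulVec L - parDer F f w x n) ≤ M * σ := by
  classical
  set e : (Fin d → ℝ) ≃ EuclideanSpace ℝ (Fin d) := (WithLp.equiv 2 (Fin d → ℝ)).symm with he
  set c : (Fin d → ℝ) ≃L[ℝ] EuclideanSpace ℝ (Fin d) :=
    (PiLp.continuousLinearEquiv 2 ℝ (fun _ : Fin d => ℝ)).symm with hc
  set g := fun i : ℕ => e (((jacCoc F f x (i + 1))⁻¹).mulVec (w (f^[i] x))) with hgdef
  obtain ⟨hgs, -⟩ := tail_est (w := w) hM0 hM (hσ x hx)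
  -- summability of the pi-valued version
  have hgs' : Summable (fun i : ℕ => ((jacCoc F f x (i + 1))⁻¹).mulVec (w (f^[i] x))) := by
    have := hgs.map (c.symm : EuclideanSpace ℝ (Fin d) →L[ℝ] (Fin d → ℝ)).toLinearMap
      (c.symm : EuclideanSpace ℝ (Fin d) →L[ℝ] (Fin d → ℝ)).continuous
    exact this
  have hLe : c L = ∑' i, g i := by
    rw [hL]
    exact ContinuousLinearMap.map_tsum (c : (Fin d → ℝ) →L[ℝ] EuclideanSpace ℝ (Fin d)) hgs'
  obtain ⟨hgs2, hbound⟩ := tail_est (x := f^[n] x) hM0 hM (hσ _ (isUnit_shift hx n))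
  set Sn := ∑ i ∈ Finset.range n, ((jacCoc F f x (i + 1))⁻¹).mulVec (w (f^[i] x)) with hSn
  rw [parDer_eq hx, ← Matrix.mulVec_sub, vnorm_eq]
  have hsub : (WithLp.equiv 2 (Fin d → ℝ)).symm (L - Sn) = ∑' i, g (i + n) := by
    have h1 : (WithLp.equiv 2 (Fin d → ℝ)).symm (L - Sn) = c L - c Sn := map_sub c L Sn
    have h2 : c Sn = ∑ i ∈ Finset.range n, g i := by
      rw [hSn, map_sum]; rfl
    rw [h1, h2, hLe, ← Summable.sum_add_tsum_nat_add n hgs, add_sub_cancel_left]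
  have hmain : (WithLp.equiv 2 (Fin d → ℝ)).symm ((jacCoc F f x n).mulVec (L - Sn))
      = ∑' i, (WithLp.equiv 2 (Fin d → ℝ)).symm
          (((jacCoc F f (f^[n] x) (i + 1))⁻¹).mulVec (w (f^[i] (f^[n] x)))) := by
    have h3 : (WithLp.equiv 2 (Fin d → ℝ)).symm ((jacCoc F f x n).mulVec (L - Sn))
        = Matrix.toEuclideanCLM (𝕜 := ℝ) (jacCoc F f x n)
            ((WithLp.equiv 2 (Fin d → ℝ)).symm (L - Sn)) := by
      rfl
    rw [h3, hsub, ContinuousLinearMap.map_tsum _ ((summable_nat_add_iff n).mpr hgs)]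
    congr 1
    funext i
    show Matrix.toEuclideanCLM (𝕜 := ℝ) (jacCoc F f x n)
        ((WithLp.equiv 2 (Fin d → ℝ)).symm
          (((jacCoc F f x (i + n + 1))⁻¹).mulVec (w (f^[i + n] x)))) = _
    rw [WithLp.equiv_symm_apply, Matrix.toEuclideanCLM_toLp, Matrix.mulVec_mulVec,
      show i + n + 1 = n + i + 1 by ring, jacCoc_mul_inv hx n i,
      Function.iterate_add_apply f i n x]
  rw [hmain]
  exact hbound

lemma vnorm_nonneg {n : Type*} [Fintype n] (v : n → ℝ) : 0 ≤ vnorm v := Real.sqrt_nonneg _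

lemma augment_mulVec {d : ℕ} (P : Matrix (Fin d) (Fin d) ℝ) (p : Fin d → ℝ) (Lv : Fin d → ℝ) :
    (augment P p).mulVec (Sum.elim Lv fun _ => -1) = P.mulVec Lv - p := by
  funext i
  simp only [augment, Matrix.mulVec, dotProduct, Fintype.sum_sum_type, Matrix.of_apply,
    Sum.elim_inl, Sum.elim_inr, Pi.sub_apply]
  simp [mul_comm]
  ring

lemma sum_mulVec' {ι n m : Type*} [Fintype n] (s : Finset ι)
    (A : ι → Matrix m n ℝ) (v : n → ℝ) :
    (∑ i ∈ s, A i) *ᵥ v = ∑ i ∈ s, A i *ᵥ v := by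
  funext j
  simp [Matrix.mulVec, dotProduct, Matrix.sum_apply, Finset.sum_apply, Finset.sum_mul]
  rw [Finset.sum_comm]

lemma sum_dotProduct' {ι n : Type*} [Fintype n] (s : Finset ι)
    (u : ι → n → ℝ) (v : n → ℝ) :
    (∑ i ∈ s, u i) ⬝ᵥ v = ∑ i ∈ s, u i ⬝ᵥ v := by
  simp [dotProduct, Finset.sum_apply, Finset.sum_mul]
  rw [Finset.sum_comm]

/-- The sharper bound on the smallest eigenvalue of the normal matrix `C̃_N(x,k)` under
condition `C_d`: it has an eigenvalue `≤ (Mσ)²(N+1)/(‖L(x,k)‖₂² + 1)`, where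
`L(x,k) = ∑_{i=1}^∞ [F_k^i(x)]⁻¹ ∂f_k/∂k(f_k^{i-1}(x))`. -/
theorem smallest_eigenvalue_sharper_bound {d : ℕ} (M σ : ℝ) (hM0 : 0 < M) (hσ0 : 0 < σ)
    (F : (Fin d → ℝ) → Matrix (Fin d) (Fin d) ℝ)
    (f : (Fin d → ℝ) → (Fin d → ℝ)) (w : (Fin d → ℝ) → (Fin d → ℝ))
    (hM : ∀ y, vnorm (w y) ≤ M)
    (hσ : ∀ y : Fin d → ℝ, (∀ n, IsUnit (jacCoc F f y n)) →
      ∀ m : ℕ, ∑ i ∈ Finset.range m, opNorm ((jacCoc F f y (i + 1))⁻¹) ≤ σ)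
    (x : Fin d → ℝ) (hx : ∀ n, IsUnit (jacCoc F f x n))
    (N : ℕ) (hN : 1 ≤ N)
    (hpos : (normalMatrix F f w x N).PosDef)
    (L : Fin d → ℝ)
    (hL : L = ∑' i : ℕ, ((jacCoc F f x (i + 1))⁻¹).mulVec (w (f^[i] x))) :
    ∃ μ : ℝ, Module.End.HasEigenvalue (Matrix.toLin' (normalMatrix F f w x N)) μ ∧
      μ ≤ (M * σ) ^ 2 * (N + 1) / (vnorm L ^ 2 + 1) := by
  classical
  set C := normalMatrix F f w x N with hC
  set T : EuclideanSpace ℝ (Fin d ⊕ Unit) →ₗ[ℝ] EuclideanSpace ℝ (Fin d ⊕ Unit) :=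
    Matrix.toEuclideanLin C with hTdef
  have hH : C.IsHermitian := by
    rw [hC, Matrix.IsHermitian, normalMatrix, Matrix.conjTranspose_sum]
    refine Finset.sum_congr rfl fun n _ => ?_
    exact Matrix.isHermitian_conjTranspose_mul_self _
  have hsymm : T.IsSymmetric := Matrix.isHermitian_iff_isSymmetric.mp hH
  have hq : ∀ u : EuclideanSpace ℝ (Fin d ⊕ Unit),
      (inner ℝ (T u) u : ℝ) = ∑ n ∈ Finset.range (N + 1),
        vnorm ((augment (jacCoc F f x n) (parDer F f w x n)).mulVec
          (WithLp.equiv 2 (Fin d ⊕ Unit → ℝ) u)) ^ 2 := by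
    intro u
    set v := WithLp.equiv 2 (Fin d ⊕ Unit → ℝ) u with hv
    have h0 : (inner ℝ (T u) u : ℝ) = (C.mulVec v) ⬝ᵥ v := by
      simp only [PiLp.inner_apply, RCLike.inner_apply, starRingEnd_apply, star_trivial]
      exact Finset.sum_congr rfl fun i _ => mul_comm _ _
    rw [h0, hC, normalMatrix, sum_mulVec', sum_dotProduct']
    refine Finset.sum_congr rfl fun n _ => ?_
    rw [← Matrix.mulVec_mulVec, Matrix.mulVec_transpose, ← Matrix.dotProduct_mulVec, vnorm_sq]
    simp [dotProduct, pow_two]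
  -- nontriviality
  haveI : Nontrivial (EuclideanSpace ℝ (Fin d ⊕ Unit)) :=
    ((WithLp.equiv 2 (Fin d ⊕ Unit → ℝ)).symm).symm.nontrivial
  -- the infimum of the Rayleigh quotient
  set μ : ℝ := ⨅ u : {u : EuclideanSpace ℝ (Fin d ⊕ Unit) // u ≠ 0},
    RCLike.re (inner ℝ (T u) (u : EuclideanSpace ℝ (Fin d ⊕ Unit)) : ℝ) / ‖(u : EuclideanSpace ℝ (Fin d ⊕ Unit))‖ ^ 2 with hμ
  have hEig : Module.End.HasEigenvalue T μ := by
    exact LinearMap.IsSymmetric.hasEigenvalue_iInf_of_finiteDimensional hsymm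
  -- test vector
  set v0 : Fin d ⊕ Unit → ℝ := Sum.elim L (fun _ => -1) with hv0
  set u0 : EuclideanSpace ℝ (Fin d ⊕ Unit) := (WithLp.equiv 2 (Fin d ⊕ Unit → ℝ)).symm v0
    with hu0def
  have hequ0 : WithLp.equiv 2 (Fin d ⊕ Unit → ℝ) u0 = v0 :=
    (WithLp.equiv 2 (Fin d ⊕ Unit → ℝ)).apply_symm_apply v0
  have hu0 : u0 ≠ 0 := by
    intro h
    have h2 : v0 = 0 := by
      have := congrArg (WithLp.equiv 2 (Fin d ⊕ Unit → ℝ)) h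
      rw [hequ0] at this
      simpa using this
    have := congrFun h2 (Sum.inr ())
    simp [hv0] at this
  have hnorm : ‖u0‖ ^ 2 = vnorm L ^ 2 + 1 := by
    rw [hu0def, ← vnorm_eq, vnorm_sq, vnorm_sq, Fintype.sum_sum_type]
    simp [hv0]
  have hden : (0 : ℝ) < vnorm L ^ 2 + 1 := by positivity
  -- nonnegativity of all Rayleigh quotients
  have hqnn : ∀ u : EuclideanSpace ℝ (Fin d ⊕ Unit), (0 : ℝ) ≤ inner ℝ (T u) u := by
    intro u
    rw [hq u]
    exact Finset.sum_nonneg fun n _ => sq_nonneg _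
  have hbdd : BddBelow (Set.range fun u : {u : EuclideanSpace ℝ (Fin d ⊕ Unit) // u ≠ 0} =>
      RCLike.re (inner ℝ (T u) (u : EuclideanSpace ℝ (Fin d ⊕ Unit)) : ℝ)
        / ‖(u : EuclideanSpace ℝ (Fin d ⊕ Unit))‖ ^ 2) := by
    refine ⟨0, ?_⟩
    rintro _ ⟨y, rfl⟩
    exact div_nonneg (by simpa using hqnn y) (by positivity)
  have hle : μ ≤ RCLike.re (inner ℝ (T u0) u0 : ℝ) / ‖u0‖ ^ 2 := by
    rw [hμ]
    exact ciInf_le hbdd ⟨u0, hu0⟩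
  -- value at the test vector
  have hval : (inner ℝ (T u0) u0 : ℝ) ≤ (M * σ) ^ 2 * (N + 1) := by
    rw [hq u0]
    have hterm : ∀ n ∈ Finset.range (N + 1),
        vnorm ((augment (jacCoc F f x n) (parDer F f w x n)).mulVec
          (WithLp.equiv 2 (Fin d ⊕ Unit → ℝ) u0)) ^ 2 ≤ (M * σ) ^ 2 := by
      intro n _
      rw [hequ0, hv0, augment_mulVec]
      exact pow_le_pow_left₀ (vnorm_nonneg _) (key_estimate hM0.le hM hσ hx L hL n) 2
    calc ∑ n ∈ Finset.range (N + 1), vnorm ((augment (jacCoc F f x n) (parDer F f w x n)).mulVec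
          (WithLp.equiv 2 (Fin d ⊕ Unit → ℝ) u0)) ^ 2
        ≤ ∑ _n ∈ Finset.range (N + 1), (M * σ) ^ 2 := Finset.sum_le_sum hterm
      _ = (M * σ) ^ 2 * (N + 1) := by
          rw [Finset.sum_const, Finset.card_range, nsmul_eq_mul]
          push_cast
          ring
  refine ⟨μ, ?_, ?_⟩
  · -- transfer the eigenvalue to `toLin'`
    obtain ⟨u, hu⟩ := hEig.exists_hasEigenvector
    have h3 : T u = μ • u := hu.apply_eq_smul
    refine Module.End.hasEigenvalue_of_hasEigenvector
      (x := WithLp.equiv 2 (Fin d ⊕ Unit → ℝ) u) ⟨?_, ?_⟩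
    · rw [Module.End.mem_eigenspace_iff]
      have h4 : WithLp.equiv 2 (Fin d ⊕ Unit → ℝ) (T u)
          = Matrix.toLin' C (WithLp.equiv 2 (Fin d ⊕ Unit → ℝ) u) := rfl
      rw [← h4, h3, WithLp.equiv_apply, WithLp.ofLp_smul]; rfl
    · intro h
      exact hu.right ((WithLp.equiv 2 (Fin d ⊕ Unit → ℝ)).injective
        (by rw [h]; simp))
  · refine le_trans hle ?_
    rw [hnorm]
    have : RCLike.re (inner ℝ (T u0) u0 : ℝ) = (inner ℝ (T u0) u0 : ℝ) := by simp
    rw [this]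
    gcongr
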